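/- Let C₁ and C₂ be bounded cochain complexes of finite-dimensional real vector spaces indexed by the natural numbers, both vanishing in degrees ≥ N, and suppose a basis b₁^i of C₁^i and a basis b₂^i of C₂^i have been chosen for each i. Let f₁, f₂ : C₁ → C₂ be chain isomorphisms that are chain homotopic to each other. Then their alternating products of matrix determinants agree: ∏_{i<N} det(M(f₁)^i)^{(-1)^i} = ∏_{i<N} det(M(f₂)^i)^{(-1)^i}, where M(f)^i denotes the matrix of f^i with respect to the bases b₁^i and b₂^i (all these determinants being nonzero). -/

import Mathlib

/-- A cochain complex of real vector spaces indexed by the natural numbers. -/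
structure CochainComplexNat where
  X : ℕ → Type
  [addCommGroup : ∀ i, AddCommGroup (X i)]
  [module : ∀ i, Module ℝ (X i)]
  d : ∀ i, X i →ₗ[ℝ] X (i + 1)
  d_comp_d : ∀ i, (d (i + 1)).comp (d i) = 0

attribute [instance] CochainComplexNat.addCommGroup CochainComplexNat.module

/-- A chain map between ℕ-indexed cochain complexes: a family of linear maps
commuting with the differentials. -/
structure ChainMap (C₁ C₂ : CochainComplexNat) where
  f : ∀ i, C₁.X i →ₗ[ℝ] C₂.X i
  comm : ∀ i, (C₂.d i).comp (f i) = (f (i + 1)).comp (C₁.d i)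

/-- The identity chain map. -/
def ChainMap.id (C : CochainComplexNat) : ChainMap C C where
  f _ := LinearMap.id
  comm _ := by simp

/-- Composition of chain maps. -/
def ChainMap.comp {C₁ C₂ C₃ : CochainComplexNat} (G : ChainMap C₂ C₃) (F : ChainMap C₁ C₂) :
    ChainMap C₁ C₃ where
  f i := (G.f i).comp (F.f i)
  comm i := by
    ext v
    have h₁ := LinearMap.congr_fun (F.comm i) v
    have h₂ := LinearMap.congr_fun (G.comm i) (F.f i v)
    simp only [LinearMap.comp_apply] at h₁ h₂ ⊢
    rw [h₂, h₁]

/-- `Homotopic F G` : there exists a chain homotopy `Φ` from `F` to `G`, i.e. a family of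
linear maps one degree down (with `Φ^0 = 0`, implemented by letting `Φ i : C₁^{i+1} → C₂^i`
play the role of `Φ^{i+1}`) with `G - F = d ∘ Φ + Φ ∘ d` in every degree. -/
def Homotopic {C₁ C₂ : CochainComplexNat} (F G : ChainMap C₁ C₂) : Prop :=
  ∃ Φ : ∀ i, C₁.X (i + 1) →ₗ[ℝ] C₂.X i,
    (G.f 0 - F.f 0 = (Φ 0).comp (C₁.d 0)) ∧
    ∀ i, G.f (i + 1) - F.f (i + 1) = (C₂.d i).comp (Φ i) + (Φ (i + 1)).comp (C₁.d (i + 1))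

/-- A chain map is a homotopy equivalence if it has a chain-homotopy inverse. -/
def IsHomotopyEquiv {C₁ C₂ : CochainComplexNat} (F : ChainMap C₁ C₂) : Prop :=
  ∃ G : ChainMap C₂ C₁,
    Homotopic (G.comp F) (ChainMap.id C₁) ∧ Homotopic (F.comp G) (ChainMap.id C₂)


open Matrix Finset

lemma key_det_lemma {κ : ℕ → Type} [∀ i, Fintype (κ i)] [∀ i, DecidableEq (κ i)]
    (N : ℕ)
    (A : ∀ i, Matrix (κ i) (κ i) ℝ) (Δ : ∀ i, Matrix (κ (i+1)) (κ i) ℝ)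
    (Q : ∀ i, Matrix (κ i) (κ (i+1)) ℝ)
    (hA0 : A 0 = 1 + Q 0 * Δ 0)
    (hA : ∀ i, A (i+1) = 1 + Δ i * Q i + Q (i+1) * Δ (i+1))
    (hΔ : ∀ i, Δ (i+1) * Δ i = 0)
    (hdet : ∀ i, (A i).det ≠ 0)
    (hempty : ∀ i, N ≤ i → IsEmpty (κ i)) :
    ∏ i ∈ Finset.range N, (A i).det ^ ((-1 : ℤ) ^ i) = 1 := by
  rcases N with _ | n
  · simp
  set R : ∀ i, Matrix (κ i) (κ i) ℝ := fun i => 1 + Q i * Δ i with hR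
  -- R is 1 in high degrees
  have hQΔ : ∀ i, n + 1 ≤ i + 1 → Q i * Δ i = 0 := by
    intro i hi
    haveI := hempty (i+1) hi
    ext j k
    simp [Matrix.mul_apply]
  have hRone : ∀ i, n + 1 ≤ i + 1 → R i = 1 := by
    intro i hi
    simp [hR, hQΔ i hi]
  have hRΔ : ∀ i, R (i+1) * Δ i = Δ i := by
    intro i
    show (1 + Q (i+1) * Δ (i+1)) * Δ i = Δ i
    rw [Matrix.add_mul, Matrix.one_mul, Matrix.mul_assoc, hΔ i, Matrix.mul_zero, add_zero]
  -- the key determinant factorization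
  have step : ∀ i, (R (i+1)).det ≠ 0 →
      (A (i+1)).det = (R (i+1)).det * (R i).det := by
    intro i hinv
    have hu : IsUnit (R (i+1)).det := Ne.isUnit hinv
    have h1 : A (i+1) = R (i+1) * (1 + (R (i+1))⁻¹ * (Δ i * Q i)) := by
      rw [Matrix.mul_add, Matrix.mul_one, ← Matrix.mul_assoc,
        Matrix.mul_nonsing_inv _ hu, Matrix.one_mul, hA i]
      show 1 + Δ i * Q i + Q (i + 1) * Δ (i + 1) = 1 + Q (i + 1) * Δ (i + 1) + Δ i * Q i
      rw [add_right_comm]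
    have h2 : (R (i+1))⁻¹ * Δ i = Δ i := by
      have h3 := congrArg (fun X => (R (i+1))⁻¹ * X) (hRΔ i)
      rw [← Matrix.mul_assoc, Matrix.nonsing_inv_mul _ hu, Matrix.one_mul] at h3
      rw [← h3]
    rw [h1, Matrix.det_mul]
    congr 1
    rw [← Matrix.mul_assoc, h2, Matrix.det_one_add_mul_comm]
  -- all R have nonzero determinant
  have hRdet : ∀ i, (R i).det ≠ 0 := by
    have key2 : ∀ j i, n + 1 ≤ i + 1 + j → (R i).det ≠ 0 := by
      intro j
      induction j with
      | zero => intro i hi; rw [hRone i (by omega)]; simp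
      | succ j ih =>
          intro i hi
          have hR1 : (R (i+1)).det ≠ 0 := ih (i+1) (by omega)
          have := step i hR1
          have hAi := hdet (i+1)
          rw [this] at hAi
          exact fun h => hAi (by rw [h, mul_zero])
    intro i
    exact key2 (n+1) i (by omega)
  -- telescoping
  have main : ∀ m, ∏ i ∈ Finset.range (m+1), (A i).det ^ ((-1 : ℤ) ^ i)
      = (R m).det ^ ((-1 : ℤ) ^ m) := by
    intro m
    induction m with
    | zero => simp [hA0, hR]
    | succ m ih =>
        rw [Finset.prod_range_succ, ih, step m (hRdet (m+1))]
        rw [mul_zpow, mul_comm ((R (m+1)).det ^ ((-1:ℤ) ^ (m+1))), ← mul_assoc,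
          ← zpow_add₀ (hRdet m)]
        have : (-1 : ℤ) ^ m + (-1 : ℤ) ^ (m+1) = 0 := by ring
        rw [this, zpow_zero, one_mul]
  rw [main n, hRone n (by omega)]
  simp

lemma alt_prod_eq {κ : ℕ → Type} [∀ i, Fintype (κ i)] [∀ i, DecidableEq (κ i)]
    (N : ℕ)
    (M Nm : ∀ i, Matrix (κ i) (κ i) ℝ)
    (Δ D₂ : ∀ i, Matrix (κ (i+1)) (κ i) ℝ)
    (Φm : ∀ i, Matrix (κ i) (κ (i+1)) ℝ)
    (hM : ∀ i, IsUnit (M i).det) (hNd : ∀ i, (Nm i).det ≠ 0)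
    (hchain : ∀ i, D₂ i * M i = M (i+1) * Δ i)
    (hΔΔ : ∀ i, Δ (i+1) * Δ i = 0)
    (h0 : Nm 0 - M 0 = Φm 0 * Δ 0)
    (hs : ∀ i, Nm (i+1) - M (i+1) = D₂ i * Φm i + Φm (i+1) * Δ (i+1))
    (hempty : ∀ i, N ≤ i → IsEmpty (κ i)) :
    ∏ i ∈ Finset.range N, (M i).det ^ ((-1 : ℤ) ^ i)
      = ∏ i ∈ Finset.range N, (Nm i).det ^ ((-1 : ℤ) ^ i) := by
  set A : ∀ i, Matrix (κ i) (κ i) ℝ := fun i => (M i)⁻¹ * Nm i with hA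
  set Q : ∀ i, Matrix (κ i) (κ (i+1)) ℝ := fun i => (M i)⁻¹ * Φm i with hQ
  have hNm : ∀ i, Nm i = M i * A i := by
    intro i
    rw [hA]
    rw [← Matrix.mul_assoc, Matrix.mul_nonsing_inv _ (hM i), Matrix.one_mul]
  have hA0 : A 0 = 1 + Q 0 * Δ 0 := by
    have h0' : Nm 0 = M 0 + Φm 0 * Δ 0 := by
      rw [← h0]; abel
    simp only [hA, hQ]
    rw [h0', Matrix.mul_add, Matrix.nonsing_inv_mul _ (hM 0), Matrix.mul_assoc]
  have hinv : ∀ i, (M (i+1))⁻¹ * D₂ i = Δ i * (M i)⁻¹ := by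
    intro i
    have h1 : (M (i+1))⁻¹ * (D₂ i * M i) * (M i)⁻¹
        = (M (i+1))⁻¹ * (M (i+1) * Δ i) * (M i)⁻¹ := by rw [hchain i]
    rw [← Matrix.mul_assoc (M (i+1))⁻¹ (M (i+1)) (Δ i),
      Matrix.nonsing_inv_mul _ (hM (i+1)), Matrix.one_mul] at h1
    rw [Matrix.mul_assoc, Matrix.mul_assoc, Matrix.mul_nonsing_inv _ (hM i),
      Matrix.mul_one] at h1
    exact h1
  have hAs : ∀ i, A (i+1) = 1 + Δ i * Q i + Q (i+1) * Δ (i+1) := by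
    intro i
    have hs' : Nm (i+1) = M (i+1) + (D₂ i * Φm i + Φm (i+1) * Δ (i+1)) := by
      rw [← hs i]; abel
    simp only [hA, hQ]
    rw [hs', Matrix.mul_add, Matrix.nonsing_inv_mul _ (hM (i+1)), Matrix.mul_add]
    rw [← Matrix.mul_assoc ((M (i+1))⁻¹) (D₂ i) (Φm i), hinv i,
      Matrix.mul_assoc (Δ i) ((M i)⁻¹) (Φm i),
      ← Matrix.mul_assoc ((M (i+1))⁻¹) (Φm (i+1)) (Δ (i+1)), ← add_assoc]
  have hAdet : ∀ i, (A i).det ≠ 0 := by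
    intro i
    simp only [hA, Matrix.det_mul]
    refine mul_ne_zero ?_ (hNd i)
    rw [Matrix.det_nonsing_inv]
    simp only [Ring.inverse_eq_inv']
    exact inv_ne_zero (hM i).ne_zero
  have hkey := key_det_lemma N A Δ Q hA0 hAs hΔΔ hAdet hempty
  calc ∏ i ∈ Finset.range N, (M i).det ^ ((-1 : ℤ) ^ i)
      = (∏ i ∈ Finset.range N, (M i).det ^ ((-1 : ℤ) ^ i)) *
        ∏ i ∈ Finset.range N, (A i).det ^ ((-1 : ℤ) ^ i) := by rw [hkey, mul_one]
    _ = ∏ i ∈ Finset.range N, ((M i).det * (A i).det) ^ ((-1 : ℤ) ^ i) := by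
        rw [← Finset.prod_mul_distrib]
        exact Finset.prod_congr rfl fun i _ => (mul_zpow _ _ _).symm
    _ = ∏ i ∈ Finset.range N, (Nm i).det ^ ((-1 : ℤ) ^ i) := by
        refine Finset.prod_congr rfl fun i _ => ?_
        conv_rhs => rw [hNm i, Matrix.det_mul]

/-- Let `C₁`, `C₂` be bounded cochain complexes of finite-dimensional real
vector spaces vanishing in degrees `≥ N`, with chosen bases `b₁ i`, `b₂ i` in each degree.
If `F₁, F₂ : C₁ → C₂` are chain isomorphisms that are chain homotopic to each other, then
their alternating products of matrix determinants agree: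
`∏_{i<N} det(M(F₁)^i)^{(-1)^i} = ∏_{i<N} det(M(F₂)^i)^{(-1)^i}`. -/
theorem alternating_det_eq_of_homotopic_chain_isos
    (C₁ C₂ : CochainComplexNat) (N : ℕ)
    (hbd₁ : ∀ i, N ≤ i → ∀ v : C₁.X i, v = 0)
    (hbd₂ : ∀ i, N ≤ i → ∀ v : C₂.X i, v = 0)
    (κ : ℕ → Type) [∀ i, Fintype (κ i)] [∀ i, DecidableEq (κ i)]
    (b₁ : ∀ i, Module.Basis (κ i) ℝ (C₁.X i)) (b₂ : ∀ i, Module.Basis (κ i) ℝ (C₂.X i))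
    (F₁ F₂ : ChainMap C₁ C₂)
    (hbij₁ : ∀ i, Function.Bijective (F₁.f i))
    (hbij₂ : ∀ i, Function.Bijective (F₂.f i))
    (hhom : Homotopic F₁ F₂) :
    ∏ i ∈ Finset.range N, (LinearMap.toMatrix (b₁ i) (b₂ i) (F₁.f i)).det ^ ((-1 : ℤ) ^ i) =
      ∏ i ∈ Finset.range N, (LinearMap.toMatrix (b₁ i) (b₂ i) (F₂.f i)).det ^ ((-1 : ℤ) ^ i) := by
  obtain ⟨Φ, hΦ0, hΦs⟩ := hhom
  have hunit : ∀ (G : ChainMap C₁ C₂), (∀ i, Function.Bijective (G.f i)) →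
      ∀ i, IsUnit (LinearMap.toMatrix (b₁ i) (b₂ i) (G.f i)).det := by
    intro G hbij i
    have hc : ((LinearEquiv.ofBijective (G.f i) (hbij i)).symm.toLinearMap).comp (G.f i)
        = LinearMap.id := by
      ext v
      simp
    have hmat := congrArg (LinearMap.toMatrix (b₁ i) (b₁ i)) hc
    rw [LinearMap.toMatrix_comp (b₁ i) (b₂ i) (b₁ i), LinearMap.toMatrix_id] at hmat
    exact Matrix.isUnit_det_of_left_inverse hmat
  refine alt_prod_eq N
    (fun i => LinearMap.toMatrix (b₁ i) (b₂ i) (F₁.f i))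
    (fun i => LinearMap.toMatrix (b₁ i) (b₂ i) (F₂.f i))
    (fun i => LinearMap.toMatrix (b₁ i) (b₁ (i+1)) (C₁.d i))
    (fun i => LinearMap.toMatrix (b₂ i) (b₂ (i+1)) (C₂.d i))
    (fun i => LinearMap.toMatrix (b₁ (i+1)) (b₂ i) (Φ i))
    (fun i => hunit F₁ hbij₁ i)
    (fun i => (hunit F₂ hbij₂ i).ne_zero)
    ?_ ?_ ?_ ?_ ?_
  · -- chain map condition for F₁
    intro i
    have h := congrArg (LinearMap.toMatrix (b₁ i) (b₂ (i+1))) (F₁.comm i)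
    rwa [LinearMap.toMatrix_comp (b₁ i) (b₂ i) (b₂ (i+1)),
      LinearMap.toMatrix_comp (b₁ i) (b₁ (i+1)) (b₂ (i+1))] at h
  · -- d ∘ d = 0
    intro i
    have h := congrArg (LinearMap.toMatrix (b₁ i) (b₁ (i+2))) (C₁.d_comp_d i)
    rwa [LinearMap.toMatrix_comp (b₁ i) (b₁ (i+1)) (b₁ (i+2)), map_zero] at h
  · -- homotopy in degree 0
    have h := congrArg (LinearMap.toMatrix (b₁ 0) (b₂ 0)) hΦ0
    rwa [map_sub, LinearMap.toMatrix_comp (b₁ 0) (b₁ 1) (b₂ 0)] at h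
  · -- homotopy in higher degrees
    intro i
    have h := congrArg (LinearMap.toMatrix (b₁ (i+1)) (b₂ (i+1))) (hΦs i)
    rwa [map_sub, map_add, LinearMap.toMatrix_comp (b₁ (i+1)) (b₂ i) (b₂ (i+1)),
      LinearMap.toMatrix_comp (b₁ (i+1)) (b₁ (i+2)) (b₂ (i+1))] at h
  · -- κ i empty in degrees ≥ N
    intro i hi
    constructor
    intro j
    exact (b₁ i).ne_zero j (hbd₁ i hi _)
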